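/- Let α be an integer with 2 ≤ |α|. Consider the presented group G on three generators x, y, t (the images of FreeGroup.of 0, FreeGroup.of 1, FreeGroup.of 2 in PresentedGroup rels) with set of relators rels = {t·x·t⁻¹·x, t·y·t⁻¹·y·x^α, x·y·x⁻¹·y⁻¹} ⊆ FreeGroup (Fin 3). Then G cannot be generated by two elements: for all a, b ∈ G, Subgroup.closure {a, b} ≠ ⊤. -/

import Mathlib

/-- The relators of the fundamental group of the torus bundle with monodromy
`!![-1, -α; 0, -1]`: with generators `x = of 0`, `y = of 1`, `t = of 2`, the relators are
`t x t⁻¹ x`, `t y t⁻¹ y x^α` and `x y x⁻¹ y⁻¹`. -/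
def torusBundleRels (α : ℤ) : Set (FreeGroup (Fin 3)) :=
  { FreeGroup.of 2 * FreeGroup.of 0 * (FreeGroup.of 2)⁻¹ * FreeGroup.of 0,
    FreeGroup.of 2 * FreeGroup.of 1 * (FreeGroup.of 2)⁻¹ * FreeGroup.of 1 *
      (FreeGroup.of 0) ^ α,
    FreeGroup.of 0 * FreeGroup.of 1 * (FreeGroup.of 0)⁻¹ * (FreeGroup.of 1)⁻¹ }

namespace TorusAux

def sgn (t : ℤ) : ℤ := if Even t then 1 else -1

lemma sgn_zero : sgn 0 = 1 := by simp [sgn]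
lemma sgn_one : sgn 1 = -1 := by simp [sgn, Int.even_iff]
lemma sgn_neg (t : ℤ) : sgn (-t) = sgn t := by simp [sgn]
lemma sgn_add (s t : ℤ) : sgn (s + t) = sgn s * sgn t := by
  by_cases hs : Even s <;> by_cases ht : Even t <;>
    simp [sgn, Int.even_add, hs, ht]
lemma sgn_mul_self (t : ℤ) : sgn t * sgn t = 1 := by
  by_cases h : Even t <;> simp [sgn, h]

@[ext] structure K (α : ℤ) where
  x : ℤ
  y : ℤ
  t : ℤ

variable {α : ℤ}

instance : Mul (K α) :=
  ⟨fun a b => ⟨a.x + sgn a.t * (b.x + α * a.t * b.y), a.y + sgn a.t * b.y, a.t + b.t⟩⟩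
instance : One (K α) := ⟨⟨0, 0, 0⟩⟩
instance : Inv (K α) :=
  ⟨fun a => ⟨sgn a.t * (-a.x + α * a.t * a.y), -(sgn a.t * a.y), -a.t⟩⟩

lemma mul_def (a b : K α) :
    a * b = ⟨a.x + sgn a.t * (b.x + α * a.t * b.y), a.y + sgn a.t * b.y, a.t + b.t⟩ := rfl
lemma inv_def (a : K α) :
    a⁻¹ = ⟨sgn a.t * (-a.x + α * a.t * a.y), -(sgn a.t * a.y), -a.t⟩ := rfl
lemma one_def : (1 : K α) = ⟨0, 0, 0⟩ := rfl

instance : Group (K α) :=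
  Group.ofLeftAxioms
    (fun a b c => by ext <;> simp [mul_def, sgn_add] <;> ring)
    (fun a => by ext <;> simp [mul_def, one_def, sgn_zero])
    (fun a => by ext <;> simp [mul_def, inv_def, one_def, sgn_neg] <;> ring)

lemma mul_t (a b : K α) : (a * b).t = a.t + b.t := rfl
lemma inv_t (a : K α) : a⁻¹.t = -a.t := rfl

lemma zpow_t (a : K α) : ∀ n : ℤ, (a ^ n).t = n * a.t := by
  intro n
  induction n using Int.induction_on with
  | zero => simp [one_def]
  | succ k ih => rw [zpow_add_one, mul_t, ih]; ring
  | pred k ih => rw [zpow_sub_one, mul_t, ih, inv_t]; ring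

lemma N_zpow (x y : ℤ) : ∀ n : ℤ, (⟨x, y, 0⟩ : K α) ^ n = ⟨n * x, n * y, 0⟩ := by
  intro n
  induction n using Int.induction_on with
  | zero => simp [one_def]
  | succ k ih => rw [zpow_add_one, ih]; ext <;> simp [mul_def, sgn_zero] <;> ring
  | pred k ih => rw [zpow_sub_one, ih]; ext <;> simp [mul_def, inv_def, sgn_zero] <;> ring

lemma T_zpow : ∀ n : ℤ, (⟨0, 0, 1⟩ : K α) ^ n = ⟨0, 0, n⟩ := by
  intro n
  induction n using Int.induction_on with
  | zero => simp [one_def]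
  | succ k ih => rw [zpow_add_one, ih]; ext <;> simp [mul_def]
  | pred k ih => rw [zpow_sub_one, ih]; ext <;> simp [mul_def, inv_def, sgn_one] <;> ring

section ClosurePair

variable {G : Type*} [Group G]
open Subgroup

lemma closure_pair_mul (a b : G) : closure {a * b, b} = closure {a, b} := by
  apply le_antisymm
  · rw [closure_le]
    rintro x (rfl | rfl)
    · exact mul_mem (subset_closure (by simp)) (subset_closure (by simp))
    · exact subset_closure (by simp)
  · rw [closure_le]
    rintro x (rfl | rfl)
    · have : x = (x * b) * b⁻¹ := by group
      rw [this]
      exact mul_mem (subset_closure (by simp)) (inv_mem (subset_closure (by simp)))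
    · exact subset_closure (by simp)

lemma closure_pair_mul_inv (a b : G) : closure {a * b⁻¹, b} = closure {a, b} := by
  apply le_antisymm
  · rw [closure_le]
    rintro x (rfl | rfl)
    · exact mul_mem (subset_closure (by simp)) (inv_mem (subset_closure (by simp)))
    · exact subset_closure (by simp)
  · rw [closure_le]
    rintro x (rfl | rfl)
    · have : x = (x * b⁻¹) * b := by group
      rw [this]
      exact mul_mem (subset_closure (by simp)) (subset_closure (by simp))
    · exact subset_closure (by simp)

lemma closure_pair_inv (a b : G) : closure {a⁻¹, b} = closure {a, b} := by
  apply le_antisymm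
  · rw [closure_le]
    rintro x (rfl | rfl)
    · exact inv_mem (subset_closure (by simp))
    · exact subset_closure (by simp)
  · rw [closure_le]
    rintro x (rfl | rfl)
    · have : x = (x⁻¹)⁻¹ := by group
      rw [this]
      exact inv_mem (subset_closure (by simp))
    · exact subset_closure (by simp)

end ClosurePair



open Subgroup

lemma terminal (hα : 2 ≤ |α|) (a b : K α) (ha : a.t = 1) (hb : b.t = 0) :
    closure {a, b} ≠ ⊤ := by
  intro htop
  obtain ⟨u₁, u₂, at'⟩ := a
  obtain ⟨v₁, v₂, bt'⟩ := b
  simp only at ha hb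
  subst ha hb
  set a : K α := ⟨u₁, u₂, 1⟩ with ha_def
  set b : K α := ⟨v₁, v₂, 0⟩ with hb_def
  set M : ℤ → ℤ → K α := fun c d => ⟨c * v₁ + d * (α * v₂), c * v₂, 0⟩ with hM
  have hM_mul : ∀ c d c' d', M c d * M c' d' = M (c + c') (d + d') := by
    intro c d c' d'
    ext <;> simp [hM, mul_def, sgn_zero] <;> ring
  have hM_inv : ∀ c d, (M c d)⁻¹ = M (-c) (-d) := by
    intro c d
    apply inv_eq_of_mul_eq_one_right
    rw [hM_mul]
    ext <;> simp [hM, one_def]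
  have hconj : ∀ c d, a * M c d * a⁻¹ = M (-c) (-(c + d)) := by
    intro c d
    ext <;> simp [hM, mul_def, inv_def, ha_def, sgn_one, sgn_neg, sgn_zero, sgn_add] <;> ring
  have hconj' : ∀ c d, a⁻¹ * M c d * a = M (-c) (c - d) := by
    intro c d
    ext <;> simp [hM, mul_def, inv_def, ha_def, sgn_one, sgn_neg, sgn_zero, sgn_add] <;> ring
  have hconjpow : ∀ n : ℤ, ∀ c d, ∃ c' d', a ^ n * M c d * a ^ (-n) = M c' d' := by
    intro n
    induction n using Int.induction_on with
    | zero => intro c d; exact ⟨c, d, by simp⟩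
    | succ k ih =>
      intro c d
      obtain ⟨c', d', h⟩ := ih c d
      refine ⟨-c', -(c' + d'), ?_⟩
      have e : a ^ ((k : ℤ) + 1) * M c d * a ^ (-((k : ℤ) + 1)) =
          a * (a ^ (k : ℤ) * M c d * a ^ (-(k : ℤ))) * a⁻¹ := by
        rw [zpow_add_one, zpow_neg, zpow_neg, zpow_add_one]
        group
      rw [e, h, hconj]
    | pred k ih =>
      intro c d
      obtain ⟨c', d', h⟩ := ih c d
      refine ⟨-c', c' - d', ?_⟩
      have e : a ^ (-(k : ℤ) - 1) * M c d * a ^ (-(-(k : ℤ) - 1)) =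
          a⁻¹ * (a ^ (-(k : ℤ)) * M c d * a ^ (-(-(k : ℤ)))) * a := by
        rw [zpow_sub_one]
        have : (-(-(k : ℤ) - 1)) = (-(-(k:ℤ))) + 1 := by ring
        rw [this, zpow_add_one]
        group
      rw [e, h, hconj']
  set S : Subgroup (K α) :=
    { carrier := {p | ∃ n c d : ℤ, p = a ^ n * M c d}
      one_mem' := ⟨0, 0, 0, by simp [hM, one_def]⟩
      mul_mem' := by
        rintro p q ⟨n, c, d, rfl⟩ ⟨m, c', d', rfl⟩
        obtain ⟨c'', d'', hc⟩ := hconjpow (-m) c d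
        have e : a ^ n * M c d * (a ^ m * M c' d') =
            a ^ (n + m) * (a ^ (-m) * M c d * a ^ (-(-m))) * M c' d' := by
          rw [zpow_add]
          group
        rw [neg_neg] at e
        refine ⟨n + m, c'' + c', d'' + d', ?_⟩
        rw [e]
        rw [show a ^ (-m) * M c d * a ^ m = a ^ (-m) * M c d * a ^ (-(-m)) by rw [neg_neg]]
        rw [hc, mul_assoc, hM_mul]
      inv_mem' := by
        rintro p ⟨n, c, d, rfl⟩
        obtain ⟨c', d', hc⟩ := hconjpow n (-c) (-d)
        refine ⟨-n, c', d', ?_⟩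
        have e : (a ^ n * M c d)⁻¹ = a ^ (-n) * (a ^ n * (M c d)⁻¹ * a ^ (-n)) := by
          group
        rw [e, hM_inv, hc] } with hS
  have hsub : ({a, b} : Set (K α)) ⊆ S := by
    rintro p (rfl | rfl)
    · exact ⟨1, 0, 0, by simp [hM]; ext <;> simp [mul_def, hM, one_def]⟩
    · refine ⟨0, 1, 0, ?_⟩
      simp only [zpow_zero, one_mul]
      ext <;> simp [hM, hb_def]
  have hle : (⊤ : Subgroup (K α)) ≤ S := htop ▸ (closure_le S).mpr hsub
  -- extract equations for (0,1,0) and (1,0,0)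
  obtain ⟨n, c, d, h1⟩ := hle (mem_top (⟨0, 1, 0⟩ : K α))
  have hn : n = 0 := by
    have := congrArg K.t h1
    simp only [mul_t, zpow_t, hM, ha_def] at this
    omega
  subst hn
  rw [zpow_zero, one_mul] at h1
  have e1 : (1 : ℤ) = c * v₂ := congrArg K.y h1
  obtain ⟨n', c', d', h2⟩ := hle (mem_top (⟨1, 0, 0⟩ : K α))
  have hn' : n' = 0 := by
    have := congrArg K.t h2
    simp only [mul_t, zpow_t, hM, ha_def] at this
    omega
  subst hn'
  rw [zpow_zero, one_mul] at h2
  have e2 : (0 : ℤ) = c' * v₂ := congrArg K.y h2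
  have e3 : (1 : ℤ) = c' * v₁ + d' * (α * v₂) := congrArg K.x h2
  have hv₂ : v₂ ≠ 0 := by
    intro h; rw [h, mul_zero] at e1; exact one_ne_zero e1
  have hc' : c' = 0 := by
    rcases mul_eq_zero.mp e2.symm with h | h
    · exact h
    · exact absurd h hv₂
  rw [hc', zero_mul, zero_add] at e3
  have hdvd : α ∣ 1 := ⟨d' * v₂, by rw [e3]; ring⟩
  have : |α| ≤ 1 := Int.le_of_dvd one_pos ((abs_dvd _ _).mpr hdvd)
  omega

lemma terminal0 (hα : 2 ≤ |α|) (a b : K α) (hb : b.t = 0) :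
    closure {a, b} ≠ ⊤ := by
  intro htop
  have hdvd : a.t ∣ (1 : ℤ) := by
    set T : Subgroup (K α) :=
      { carrier := {p | a.t ∣ p.t}
        one_mem' := dvd_zero _
        mul_mem' := by
          intro p q hp hq
          exact dvd_add hp hq
        inv_mem' := by
          intro p hp
          exact (dvd_neg).mpr hp } with hT
    have hsub : ({a, b} : Set (K α)) ⊆ T := by
      rintro p (rfl | rfl)
      · exact dvd_refl _
      · show a.t ∣ p.t
        rw [hb]
        exact dvd_zero _
    have hle : (⊤ : Subgroup (K α)) ≤ T := htop ▸ (closure_le T).mpr hsub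
    exact hle (mem_top (⟨0, 0, 1⟩ : K α))
  rcases Int.isUnit_iff.mp (isUnit_of_dvd_one hdvd) with h1 | h1
  · exact terminal hα a b h1 hb htop
  · refine terminal hα a⁻¹ b (by rw [inv_t, h1]; ring) hb ?_
    rw [closure_pair_inv]
    exact htop

lemma not_two_gen (hα : 2 ≤ |α|) (a b : K α) : closure {a, b} ≠ ⊤ := by
  suffices h : ∀ (N : ℕ) (a b : K α), a.t.natAbs + b.t.natAbs ≤ N → closure {a, b} ≠ ⊤ from
    h (a.t.natAbs + b.t.natAbs) a b le_rfl
  intro N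
  induction N with
  | zero =>
    intro a b hab
    have hb : b.t = 0 := by omega
    exact terminal0 hα a b hb
  | succ n ih =>
    intro a b hab htop
    by_cases hb0 : b.t = 0
    · exact terminal0 hα a b hb0 htop
    by_cases ha0 : a.t = 0
    · refine terminal0 hα b a ha0 ?_
      rw [Set.pair_comm b a]
      exact htop
    by_cases hle : b.t.natAbs ≤ a.t.natAbs
    · rcases (show (a.t - b.t).natAbs < a.t.natAbs ∨ (a.t + b.t).natAbs < a.t.natAbs by omega)
        with h | h
      · refine ih (a * b⁻¹) b ?_ ?_
        · have e : (a * b⁻¹).t = a.t - b.t := by rw [mul_t, inv_t]; ring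
          rw [e]; omega
        · rw [closure_pair_mul_inv]; exact htop
      · refine ih (a * b) b ?_ ?_
        · have e : (a * b).t = a.t + b.t := mul_t a b
          rw [e]; omega
        · rw [closure_pair_mul]; exact htop
    · rcases (show (b.t - a.t).natAbs < b.t.natAbs ∨ (b.t + a.t).natAbs < b.t.natAbs by omega)
        with h | h
      · refine ih a (b * a⁻¹) ?_ ?_
        · have e : (b * a⁻¹).t = b.t - a.t := by rw [mul_t, inv_t]; ring
          rw [e]; omega
        · rw [Set.pair_comm a (b * a⁻¹), closure_pair_mul_inv, Set.pair_comm b a]; exact htop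
      · refine ih a (b * a) ?_ ?_
        · have e : (b * a).t = b.t + a.t := mul_t b a
          rw [e]; omega
        · rw [Set.pair_comm a (b * a), closure_pair_mul, Set.pair_comm b a]; exact htop

end TorusAux


namespace TorusAux

variable {α : ℤ}

/-- The images of the three generators in `K α`. -/
def gens (α : ℤ) : Fin 3 → K α := ![⟨1, 0, 0⟩, ⟨0, 1, 0⟩, ⟨0, 0, 1⟩]

lemma gens_rels : ∀ r ∈ torusBundleRels α, FreeGroup.lift (gens α) r = 1 := by
  intro r hr
  rcases hr with rfl | rfl | rfl <;>
    simp only [map_mul, map_inv, map_zpow, FreeGroup.lift_apply_of, gens,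
      Matrix.cons_val_zero, Matrix.cons_val_one, Matrix.head_cons, Matrix.cons_val_two,
      Matrix.tail_cons]
  · ext <;> simp [mul_def, inv_def, one_def, sgn_one, sgn_neg, sgn_zero, sgn_add] <;> ring
  · rw [N_zpow]
    ext <;> simp [mul_def, inv_def, one_def, sgn_one, sgn_neg, sgn_zero, sgn_add] <;> ring
  · ext <;> simp [mul_def, inv_def, one_def, sgn_zero] <;> ring

/-- The canonical surjection from the presented group to `K α`. -/
noncomputable def phi (α : ℤ) : PresentedGroup (torusBundleRels α) →* K α :=
  PresentedGroup.toGroup (gens_rels (α := α))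

lemma phi_surjective : Function.Surjective (phi α) := by
  rintro ⟨p, q, r⟩
  refine ⟨PresentedGroup.of 0 ^ p * PresentedGroup.of 1 ^ q * PresentedGroup.of 2 ^ r, ?_⟩
  simp only [phi, map_mul, map_zpow, PresentedGroup.toGroup.of, gens,
    Matrix.cons_val_zero, Matrix.cons_val_one, Matrix.head_cons, Matrix.cons_val_two,
    Matrix.tail_cons]
  rw [N_zpow, N_zpow, T_zpow]
  ext <;> simp [mul_def, sgn_zero] <;> ring

end TorusAux


/-- For `|α| ≥ 2`, the group `⟨x, y, t ∣ t x t⁻¹ x, t y t⁻¹ y x^α, [x,y]⟩` cannot be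
generated by two elements. -/
theorem rank_three_presented_torus_bundle (α : ℤ) (hα : 2 ≤ |α|)
    (a b : PresentedGroup (torusBundleRels α)) :
    Subgroup.closure {a, b} ≠ ⊤ := by
  intro htop
  refine TorusAux.not_two_gen hα (TorusAux.phi α a) (TorusAux.phi α b) ?_
  have h1 : Subgroup.map (TorusAux.phi α) (Subgroup.closure {a, b}) = ⊤ := by
    rw [htop]
    exact Subgroup.map_top_of_surjective _ TorusAux.phi_surjective
  rw [MonoidHom.map_closure, Set.image_pair] at h1
  exact h1
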